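/- Let n > 1 be an integer and K any field. Consider the following list of polynomials over K (images of integer polynomials in the variable t): 0; 1; t^i for 1 ≤ i ≤ n+1; t^{i−1}·(t+1) for 1 ≤ i ≤ n−1; and for 1 ≤ j ≤ n−1 the polynomials t^{j+2} + j·t^j + (j−1)·t^{j−1} and t^{j+2} + (j+1)·t^j + j·t^{j−1}. Then all of these polynomials are pairwise distinct as elements of K[t], regardless of the characteristic of K. Consequently, there exists a finite subset S ⊆ K, all of whose elements are algebraic over the prime subfield of K, such that for every t_0 ∈ K ∖ S the evaluations of these polynomials at t_0 are pairwise distinct elements of K. -/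

import Mathlib

open Polynomial

noncomputable section

/-- The list of polynomials over `K` appearing in the construction of the system `Φ_n`:
`0`; `1`; `t^i` for `1 ≤ i ≤ n+1`; `t^(i-1)(t+1)` for `1 ≤ i ≤ n-1`; and, for
`1 ≤ j ≤ n-1`, the polynomials `t^(j+2) + j t^j + (j-1) t^(j-1)` and
`t^(j+2) + (j+1) t^j + j t^(j-1)`. -/
def polyList (K : Type) [Field K] (n : ℕ) : List (Polynomial K) :=
  [0, 1] ++
  ((List.range (n + 1)).map fun i => (X : K[X]) ^ (i + 1)) ++
  ((List.range (n - 1)).map fun i => (X : K[X]) ^ i * (X + 1)) ++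
  ((List.range (n - 1)).map fun j =>
    (X : K[X]) ^ (j + 3) + C ((j + 1 : ℕ) : K) * X ^ (j + 1) + C ((j : ℕ) : K) * X ^ j) ++
  ((List.range (n - 1)).map fun j =>
    (X : K[X]) ^ (j + 3) + C ((j + 2 : ℕ) : K) * X ^ (j + 1) + C ((j + 1 : ℕ) : K) * X ^ j)

namespace PolyListAux

variable {F : Type} [Field F]

lemma cmul (i m : ℕ) :
    ((X : F[X]) ^ i * (X + 1)).coeff m =
      (if m = i + 1 then 1 else 0) + (if m = i then 1 else 0) := by
  have h : (X : F[X]) ^ i * (X + 1) = X ^ (i + 1) + X ^ i := by ring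
  rw [h, coeff_add, coeff_X_pow, coeff_X_pow]

lemma cT (j m : ℕ) (c d : F) :
    ((X : F[X]) ^ (j + 3) + C c * X ^ (j + 1) + C d * X ^ j).coeff m =
      (if m = j + 3 then 1 else 0) + (if m = j + 1 then c else 0) +
        (if m = j then d else 0) := by
  simp [coeff_add, coeff_C_mul, coeff_X_pow, mul_ite]

lemma ne_pow_pow {a b : ℕ} (h : a < b) : (X : F[X]) ^ (a + 1) ≠ X ^ (b + 1) := by
  intro he
  have hc := congrArg (fun p => Polynomial.coeff p (b + 1)) he
  simp only [coeff_X_pow] at hc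
  rw [if_neg (show ¬(b + 1 = a + 1) by omega)] at hc
  simp at hc

lemma ne_mul_mul {a b : ℕ} (h : a < b) :
    (X : F[X]) ^ a * (X + 1) ≠ X ^ b * (X + 1) := by
  intro he
  have hc := congrArg (fun p => Polynomial.coeff p (b + 1)) he
  simp only [cmul] at hc
  rw [if_neg (show ¬(b + 1 = a + 1) by omega), if_neg (show ¬(b + 1 = a) by omega),
    if_neg (show ¬(b + 1 = b) by omega)] at hc
  simp at hc

lemma pow_ne_zero' (i : ℕ) : (X : F[X]) ^ (i + 1) ≠ 0 :=
  pow_ne_zero _ X_ne_zero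

lemma pow_ne_one' (i : ℕ) : (X : F[X]) ^ (i + 1) ≠ 1 := by
  intro he
  have hc := congrArg (fun p => Polynomial.coeff p (i + 1)) he
  simp only [coeff_X_pow, coeff_one] at hc
  rw [if_neg (show ¬(i + 1 = 0) by omega)] at hc
  simp at hc

lemma Xmul_ne_zero (i : ℕ) : (X : F[X]) ^ i * (X + 1) ≠ 0 := by
  intro he
  have hc := congrArg (fun p => Polynomial.coeff p i) he
  simp only [cmul, coeff_zero] at hc
  rw [if_neg (show ¬(i = i + 1) by omega)] at hc
  simp at hc

lemma Xmul_ne_one (i : ℕ) : (X : F[X]) ^ i * (X + 1) ≠ 1 := by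
  intro he
  have hc := congrArg (fun p => Polynomial.coeff p (i + 1)) he
  simp only [cmul, coeff_one] at hc
  rw [if_neg (show ¬(i + 1 = i) by omega), if_neg (show ¬(i + 1 = 0) by omega)] at hc
  simp at hc

lemma T_ne_zero (j : ℕ) (c d : F) :
    (X : F[X]) ^ (j + 3) + C c * X ^ (j + 1) + C d * X ^ j ≠ 0 := by
  intro he
  have hc := congrArg (fun p => Polynomial.coeff p (j + 3)) he
  simp only [cT, coeff_zero] at hc
  rw [if_neg (show ¬(j + 3 = j + 1) by omega), if_neg (show ¬(j + 3 = j) by omega)] at hc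
  simp at hc

lemma T_ne_one (j : ℕ) (c d : F) :
    (X : F[X]) ^ (j + 3) + C c * X ^ (j + 1) + C d * X ^ j ≠ 1 := by
  intro he
  have hc := congrArg (fun p => Polynomial.coeff p (j + 3)) he
  simp only [cT, coeff_one] at hc
  rw [if_neg (show ¬(j + 3 = j + 1) by omega), if_neg (show ¬(j + 3 = j) by omega),
    if_neg (show ¬(j + 3 = 0) by omega)] at hc
  simp at hc

lemma pow_ne_mul (a i : ℕ) : (X : F[X]) ^ (a + 1) ≠ X ^ i * (X + 1) := by
  intro he
  by_cases hia : i + 1 = a + 1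
  · have h2 := congrArg (fun p => Polynomial.coeff p i) he
    simp only [coeff_X_pow, cmul] at h2
    rw [if_neg (show ¬(i = a + 1) by omega), if_neg (show ¬(i = i + 1) by omega)] at h2
    simp at h2
  · have h1 := congrArg (fun p => Polynomial.coeff p (i + 1)) he
    simp only [coeff_X_pow, cmul] at h1
    rw [if_neg hia, if_neg (show ¬(i + 1 = i) by omega)] at h1
    simp at h1

lemma pow_ne_T (a j : ℕ) (c d : F) (hcd : d + 1 = c) :
    (X : F[X]) ^ (a + 1) ≠ X ^ (j + 3) + C c * X ^ (j + 1) + C d * X ^ j := by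
  intro he
  by_cases ha : j + 3 = a + 1
  · have h1 := congrArg (fun p => Polynomial.coeff p (j + 1)) he
    have h2 := congrArg (fun p => Polynomial.coeff p j) he
    simp only [coeff_X_pow, cT] at h1 h2
    rw [if_neg (show ¬(j + 1 = a + 1) by omega), if_neg (show ¬(j + 1 = j + 3) by omega),
      if_neg (show ¬(j + 1 = j) by omega)] at h1
    rw [if_neg (show ¬(j = a + 1) by omega), if_neg (show ¬(j = j + 3) by omega),
      if_neg (show ¬(j = j + 1) by omega)] at h2
    simp only [eq_self_iff_true, if_true, zero_add, add_zero] at h1 h2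
    rw [← h1, ← h2] at hcd
    simp at hcd
  · have h3 := congrArg (fun p => Polynomial.coeff p (j + 3)) he
    simp only [coeff_X_pow, cT] at h3
    rw [if_neg ha, if_neg (show ¬(j + 3 = j + 1) by omega),
      if_neg (show ¬(j + 3 = j) by omega)] at h3
    simp at h3

lemma mul_ne_T (i j : ℕ) (c d : F) :
    (X : F[X]) ^ i * (X + 1) ≠ X ^ (j + 3) + C c * X ^ (j + 1) + C d * X ^ j := by
  intro he
  by_cases h1 : i = j + 3
  · have hc := congrArg (fun p => Polynomial.coeff p (i + 1)) he
    simp only [cmul, cT] at hc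
    rw [if_neg (show ¬(i + 1 = i) by omega), if_neg (show ¬(i + 1 = j + 3) by omega),
      if_neg (show ¬(i + 1 = j + 1) by omega), if_neg (show ¬(i + 1 = j) by omega)] at hc
    simp at hc
  · by_cases h2 : i = j + 2
    · have hc := congrArg (fun p => Polynomial.coeff p i) he
      simp only [cmul, cT] at hc
      rw [if_neg (show ¬(i = i + 1) by omega), if_neg (show ¬(i = j + 3) by omega),
        if_neg (show ¬(i = j + 1) by omega), if_neg (show ¬(i = j) by omega)] at hc
      simp at hc
    · have hc := congrArg (fun p => Polynomial.coeff p (j + 3)) he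
      simp only [cmul, cT] at hc
      rw [if_neg (show ¬(j + 3 = i + 1) by omega), if_neg (show ¬(j + 3 = i) by omega),
        if_neg (show ¬(j + 3 = j + 1) by omega), if_neg (show ¬(j + 3 = j) by omega)] at hc
      simp at hc

lemma T_ne_T_of_lt {j k : ℕ} (h : j < k) (c d c' d' : F) :
    (X : F[X]) ^ (j + 3) + C c * X ^ (j + 1) + C d * X ^ j ≠
      X ^ (k + 3) + C c' * X ^ (k + 1) + C d' * X ^ k := by
  intro he
  have hc := congrArg (fun p => Polynomial.coeff p (k + 3)) he
  simp only [cT] at hc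
  rw [if_neg (show ¬(k + 3 = j + 3) by omega), if_neg (show ¬(k + 3 = j + 1) by omega),
    if_neg (show ¬(k + 3 = j) by omega), if_neg (show ¬(k + 3 = k + 1) by omega),
    if_neg (show ¬(k + 3 = k) by omega)] at hc
  simp at hc

lemma A_ne_B (j : ℕ) :
    (X : F[X]) ^ (j + 3) + C ((j + 1 : ℕ) : F) * X ^ (j + 1) + C ((j : ℕ) : F) * X ^ j ≠
      X ^ (j + 3) + C ((j + 2 : ℕ) : F) * X ^ (j + 1) + C ((j + 1 : ℕ) : F) * X ^ j := by
  intro he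
  have hc := congrArg (fun p => Polynomial.coeff p (j + 1)) he
  simp only [cT] at hc
  rw [if_neg (show ¬(j + 1 = j + 3) by omega), if_neg (show ¬(j + 1 = j) by omega),
    if_neg (show ¬(j + 1 = j) by omega)] at hc
  simp only [eq_self_iff_true, if_true, zero_add, add_zero] at hc
  push_cast at hc
  have h0 : (0 : F) = 1 := by linear_combination hc
  exact zero_ne_one h0

lemma nodup_map_range {f : ℕ → F[X]} (m : ℕ) (h : ∀ a b, a < b → f a ≠ f b) :
    ((List.range m).map f).Nodup :=
  List.pairwise_map.mpr ((List.pairwise_lt_range (n := m)).imp (fun hab => h _ _ hab))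

end PolyListAux

open PolyListAux in
lemma nodup_polyList (F : Type) [Field F] (n : ℕ) : (polyList F n).Nodup := by
  have hc1 : ∀ j : ℕ, ((j : ℕ) : F) + 1 = ((j + 1 : ℕ) : F) := by intro j; push_cast; ring
  have hc2 : ∀ j : ℕ, ((j + 1 : ℕ) : F) + 1 = ((j + 2 : ℕ) : F) := by intro j; push_cast; ring
  rw [polyList]
  simp only [List.nodup_append', List.disjoint_append_left]
  and_intros
  · simp
  · exact nodup_map_range _ fun a b h => ne_pow_pow h
  · intro a h1 h2
    simp only [List.mem_cons, List.not_mem_nil, or_false, List.mem_map, List.mem_range] at h1 h2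
    obtain ⟨i, -, rfl⟩ := h2
    rcases h1 with h | h
    exacts [pow_ne_zero' i h, pow_ne_one' i h]
  · exact nodup_map_range _ fun a b h => ne_mul_mul h
  · intro a h1 h2
    simp only [List.mem_cons, List.not_mem_nil, or_false, List.mem_map, List.mem_range] at h1 h2
    obtain ⟨i, -, rfl⟩ := h2
    rcases h1 with h | h
    exacts [Xmul_ne_zero i h, Xmul_ne_one i h]
  · intro a h1 h2
    simp only [List.mem_map, List.mem_range] at h1 h2
    obtain ⟨i, -, rfl⟩ := h1
    obtain ⟨k, -, h⟩ := h2
    exact pow_ne_mul i k h.symm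
  · exact nodup_map_range _ fun a b h => T_ne_T_of_lt h _ _ _ _
  · intro a h1 h2
    simp only [List.mem_cons, List.not_mem_nil, or_false, List.mem_map, List.mem_range] at h1 h2
    obtain ⟨j, -, rfl⟩ := h2
    rcases h1 with h | h
    exacts [T_ne_zero j _ _ h, T_ne_one j _ _ h]
  · intro a h1 h2
    simp only [List.mem_map, List.mem_range] at h1 h2
    obtain ⟨i, -, rfl⟩ := h1
    obtain ⟨j, -, h⟩ := h2
    exact pow_ne_T i j _ _ (hc1 j) h.symm
  · intro a h1 h2
    simp only [List.mem_map, List.mem_range] at h1 h2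
    obtain ⟨i, -, rfl⟩ := h1
    obtain ⟨j, -, h⟩ := h2
    exact mul_ne_T i j _ _ h.symm
  · exact nodup_map_range _ fun a b h => T_ne_T_of_lt h _ _ _ _
  · intro a h1 h2
    simp only [List.mem_cons, List.not_mem_nil, or_false, List.mem_map, List.mem_range] at h1 h2
    obtain ⟨j, -, rfl⟩ := h2
    rcases h1 with h | h
    exacts [T_ne_zero j _ _ h, T_ne_one j _ _ h]
  · intro a h1 h2
    simp only [List.mem_map, List.mem_range] at h1 h2
    obtain ⟨i, -, rfl⟩ := h1
    obtain ⟨j, -, h⟩ := h2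
    exact pow_ne_T i j _ _ (hc2 j) h.symm
  · intro a h1 h2
    simp only [List.mem_map, List.mem_range] at h1 h2
    obtain ⟨i, -, rfl⟩ := h1
    obtain ⟨j, -, h⟩ := h2
    exact mul_ne_T i j _ _ h.symm
  · intro a h1 h2
    simp only [List.mem_map, List.mem_range] at h1 h2
    obtain ⟨j, -, rfl⟩ := h1
    obtain ⟨k, -, h⟩ := h2
    rcases lt_trichotomy j k with hlt | rfl | hlt
    · exact T_ne_T_of_lt hlt _ _ _ _ h.symm
    · exact A_ne_B j h.symm
    · exact T_ne_T_of_lt hlt _ _ _ _ h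

lemma polyList_map (K : Type) [Field K] (n : ℕ) :
    polyList K n = (polyList ↥(⊥ : Subfield K) n).map
      (Polynomial.map (algebraMap (⊥ : Subfield K) K)) := by
  simp only [polyList, List.map_append, List.map_map, List.map_cons, List.map_nil,
    Polynomial.map_zero, Polynomial.map_one, Function.comp_def, Polynomial.map_add,
    Polynomial.map_mul, Polynomial.map_pow, Polynomial.map_X, Polynomial.map_C,
    map_natCast, Polynomial.map_natCast]

/-- the polynomials in `polyList` are pairwise distinct in `K[t]` regardless
of the characteristic of `K`, and there is a finite set `S ⊆ K` of elements algebraic over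
the prime subfield of `K` such that the evaluations at any `t₀ ∉ S` are pairwise distinct. -/
theorem stmt_19 (K : Type) [Field K] (n : ℕ) (hn : 1 < n) :
    (polyList K n).Nodup ∧
    ∃ S : Finset K, (∀ s ∈ S, IsAlgebraic (⊥ : Subfield K) s) ∧
      ∀ t₀ : K, t₀ ∉ S → ((polyList K n).map (fun p => p.eval t₀)).Nodup := by
  classical
  refine ⟨nodup_polyList K n, ?_⟩
  set f := algebraMap (⊥ : Subfield K) K with hf
  set L₀ := polyList ↥(⊥ : Subfield K) n with hL₀
  have hmap : polyList K n = L₀.map (Polynomial.map f) := polyList_map K n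
  set LP : List ((⊥ : Subfield K)[X]) :=
    ((L₀ ×ˢ L₀).filter fun pq => pq.1 ≠ pq.2).map (fun pq => pq.1 - pq.2) with hLP
  set D₀ := LP.prod with hD₀def
  have hLPne : (0 : (⊥ : Subfield K)[X]) ∉ LP := by
    intro h0
    simp only [hLP, List.mem_map, List.mem_filter, List.mem_product] at h0
    obtain ⟨⟨p, q⟩, ⟨-, hne⟩, hsub⟩ := h0
    have : p ≠ q := by simpa using hne
    exact this (sub_eq_zero.mp hsub)
  have hD0 : D₀ ≠ 0 := List.prod_ne_zero hLPne
  have hfinj : Function.Injective f := (algebraMap (⊥ : Subfield K) K).injective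
  set D := D₀.map f with hDdef
  have hD : D ≠ 0 := (Polynomial.map_ne_zero_iff hfinj).mpr hD0
  refine ⟨D.roots.toFinset, ?_, ?_⟩
  · intro s hs
    rw [Multiset.mem_toFinset, mem_roots'] at hs
    refine ⟨D₀, hD0, ?_⟩
    rw [aeval_def, ← hf, ← Polynomial.eval_map f, ← hDdef]
    exact hs.2
  · intro t₀ ht₀
    rw [hmap, List.map_map]
    refine List.Nodup.map_on ?_ (nodup_polyList _ n)
    intro p₀ hp₀ q₀ hq₀ heq
    by_contra hne
    simp only [Function.comp_apply] at heq
    have hmem : p₀ - q₀ ∈ LP := by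
      simp only [hLP, List.mem_map, List.mem_filter, List.mem_product]
      exact ⟨(p₀, q₀), ⟨List.mem_product.mpr ⟨hp₀, hq₀⟩, by simpa using hne⟩, rfl⟩
    obtain ⟨e, he⟩ := List.dvd_prod hmem
    have hevalD : D.eval t₀ = 0 := by
      rw [hDdef, hD₀def, he, Polynomial.map_mul, eval_mul, Polynomial.map_sub, eval_sub, heq]
      ring
    have ht : t₀ ∈ D.roots.toFinset := by
      rw [Multiset.mem_toFinset, mem_roots hD]
      exact hevalD
    exact ht₀ ht
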